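/- (F₄ sequence.) On ℝ⁶ = ℝ⁵ × ℝ (d = 5 scale factors, one dilaton φ) consider the six wall forms w_{−1} = e₅ − e₄, w₀ = e₄ − e₃, w₁ = e₃ − e₂, w₂ = e₂ − e₁, w₃ = e₁ − (1/2)φ, w₄ = φ. Then (w_i|w_i) = 2 for i = −1, 0, 1, 2 and (w₃|w₃) = (w₄|w₄) = 1, and the Cartan matrix A_{ij} = 2(w_i|w_j)/(w_i|w_i) equals the 6×6 matrix with rows (2,−1,0,0,0,0), (−1,2,−1,0,0,0), (0,−1,2,−1,0,0), (0,0,−1,2,−1,0), (0,0,0,−2,2,−1), (0,0,0,0,−1,2) in the ordering (w_{−1}, w₀, w₁, w₂, w₃, w₄). This is the generalized Cartan matrix of the hyperbolic overextension F₄^∧∧. -/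

import Mathlib

/-- The wall scalar product on `ℝ⁵ × ℝ` (`d = 5` scale factors, one dilaton):
`(w|w') = Σᵢ wᵢw'ᵢ − (1/4)(Σᵢ wᵢ)(Σᵢ w'ᵢ) + w̃ w̃'`. -/
noncomputable def wallIPF (w w' : (Fin 5 → ℝ) × ℝ) : ℝ :=
  (∑ i, w.1 i * w'.1 i) - (1 / 4) * (∑ i, w.1 i) * (∑ i, w'.1 i) + w.2 * w'.2

set_option maxHeartbeats 1000000 in
/-- (F₄ sequence.) On `ℝ⁵ × ℝ` the six dominant wall forms `w_{−1} = e₅ − e₄`,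
`w₀ = e₄ − e₃`, `w₁ = e₃ − e₂`, `w₂ = e₂ − e₁`, `w₃ = e₁ − (1/2)φ`, `w₄ = φ` have
squared norms `2, 2, 2, 2, 1, 1`, and their Cartan matrix
`A_{ij} = 2(w_i|w_j)/(w_i|w_i)` equals the generalized Cartan matrix of the hyperbolic
overextension `F₄^∧∧` with rows `(2,−1,0,0,0,0), (−1,2,−1,0,0,0), (0,−1,2,−1,0,0),
(0,0,−1,2,−1,0), (0,0,0,−2,2,−1), (0,0,0,0,−1,2)`. -/
theorem F4_billiard (w : Fin 6 → (Fin 5 → ℝ) × ℝ)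
    (hw0 : w 0 = (fun l => (if l.val = 4 then (1 : ℝ) else 0)
      - (if l.val = 3 then 1 else 0), 0))
    (hw1 : w 1 = (fun l => (if l.val = 3 then (1 : ℝ) else 0)
      - (if l.val = 2 then 1 else 0), 0))
    (hw2 : w 2 = (fun l => (if l.val = 2 then (1 : ℝ) else 0)
      - (if l.val = 1 then 1 else 0), 0))
    (hw3 : w 3 = (fun l => (if l.val = 1 then (1 : ℝ) else 0)
      - (if l.val = 0 then 1 else 0), 0))
    (hw4 : w 4 = (fun l => if l.val = 0 then (1 : ℝ) else 0, -(1 / 2)))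
    (hw5 : w 5 = (fun _ => 0, 1))
    (A : Fin 6 → Fin 6 → ℝ)
    (hA : ∀ i j, A i j = 2 * wallIPF (w i) (w j) / wallIPF (w i) (w i)) :
    wallIPF (w 0) (w 0) = 2 ∧ wallIPF (w 1) (w 1) = 2 ∧
    wallIPF (w 2) (w 2) = 2 ∧ wallIPF (w 3) (w 3) = 2 ∧
    wallIPF (w 4) (w 4) = 1 ∧ wallIPF (w 5) (w 5) = 1 ∧
    (∀ i j, A i j =
      (!![2, -1, 0, 0, 0, 0;
          -1, 2, -1, 0, 0, 0;
          0, -1, 2, -1, 0, 0;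
          0, 0, -1, 2, -1, 0;
          0, 0, 0, -2, 2, -1;
          0, 0, 0, 0, -1, 2] : Matrix (Fin 6) (Fin 6) ℝ) i j) := by
  have c0 : ((0:Fin 5):ℕ) = 0 := rfl
  have c1 : ((1:Fin 5):ℕ) = 1 := rfl
  have c2 : ((2:Fin 5):ℕ) = 2 := rfl
  have c3 : ((3:Fin 5):ℕ) = 3 := rfl
  have c4 : ((4:Fin 5):ℕ) = 4 := rfl
  have f0 : (Finset.filter (fun x : Fin 5 => (x:ℕ) = 0) Finset.univ).card = 1 := by decide
  have f1 : (Finset.filter (fun x : Fin 5 => (x:ℕ) = 1) Finset.univ).card = 1 := by decide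
  have f2 : (Finset.filter (fun x : Fin 5 => (x:ℕ) = 2) Finset.univ).card = 1 := by decide
  have f3 : (Finset.filter (fun x : Fin 5 => (x:ℕ) = 3) Finset.univ).card = 1 := by decide
  have f4 : (Finset.filter (fun x : Fin 5 => (x:ℕ) = 4) Finset.univ).card = 1 := by decide
  have hw0' : ∀ (h : 0 < 6), w ⟨0, h⟩ = w 0 := fun _ => rfl
  have hw1' : ∀ (h : 1 < 6), w ⟨1, h⟩ = w 1 := fun _ => rfl
  have hw2' : ∀ (h : 2 < 6), w ⟨2, h⟩ = w 2 := fun _ => rfl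
  have hw3' : ∀ (h : 3 < 6), w ⟨3, h⟩ = w 3 := fun _ => rfl
  have hw4' : ∀ (h : 4 < 6), w ⟨4, h⟩ = w 4 := fun _ => rfl
  have hw5' : ∀ (h : 5 < 6), w ⟨5, h⟩ = w 5 := fun _ => rfl
  refine ⟨?_, ?_, ?_, ?_, ?_, ?_, ?_⟩ <;>
    first
      | (intro i j
         fin_cases i <;> fin_cases j <;>
           norm_num [hA, hw0', hw1', hw2', hw3', hw4', hw5', hw0, hw1, hw2, hw3, hw4, hw5, wallIPF, Fin.sum_univ_five,
             c0, c1, c2, c3, c4, f0, f1, f2, f3, f4, Matrix.cons_val', Matrix.cons_val_zero, Matrix.cons_val_one,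
             Matrix.head_cons, Matrix.cons_val_fin_one, Matrix.empty_val',
             Matrix.head_fin_const, Matrix.cons_val_succ, -Fin.val_eq_zero_iff])
      | (simp only [hw0, hw1, hw2, hw3, hw4, hw5, wallIPF, Fin.sum_univ_five,
          c0, c1, c2, c3, c4]
         norm_num)
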